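/- Fix a finite field F_q, N ≥ 1 and n ≥ 1. The number of degree-n morphisms P^1 → P^N defined over F_q, i.e., the number of orbits of the diagonal scalar action of F_q* on (N+1)-tuples of homogeneous degree-n polynomials in F_q[X,Y] with no common zero in P^1(F̄_q), equals ((q^{N+1}−1)/(q−1)) · (q^{(N+1)n} − q^{(N+1)n−N}). -/

import Mathlib

open Polynomial
namespace Stmt11

variable {F : Type*} [Field F] [Fintype F] [DecidableEq F]


theorem gcd_eq_one_iff_no_common_root {K : ℕ} [NeZero K] (p : Fin K → Polynomial F) :
    Finset.univ.gcd p = 1 ↔ ∀ a : AlgebraicClosure F, ∃ i, Polynomial.aeval a (p i) ≠ 0 := by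
  constructor
  · intro hg a
    by_contra h
    push_neg at h
    have hdvd : minpoly F a ∣ Finset.univ.gcd p :=
      Finset.dvd_gcd fun i _ => minpoly.dvd F a (h i)
    rw [hg] at hdvd
    exact (minpoly.irreducible (Algebra.IsIntegral.isIntegral a)).not_isUnit
      (isUnit_of_dvd_one hdvd)
  · intro h
    set g := Finset.univ.gcd p with hgdef
    by_cases h0 : g = 0
    · exfalso
      have hz : ∀ i, p i = 0 := fun i => by
        have := Finset.gcd_dvd (Finset.mem_univ i) (f := p)
        rw [← hgdef, h0] at this
        exact zero_dvd_iff.mp this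
      obtain ⟨i, hi⟩ := h 0
      exact hi (by simp [hz i])
    · have hm : g.Monic := by
        have := Polynomial.monic_normalize h0
        rwa [Finset.normalize_gcd] at this
      by_contra hne
      have hdeg : g.degree ≠ 0 := by
        intro hd
        exact hne (hm.degree_le_zero_iff_eq_one.mp hd.le)
      have hdeg' : (g.map (algebraMap F (AlgebraicClosure F))).degree ≠ 0 := by
        rwa [degree_map]
      obtain ⟨a, ha⟩ := IsAlgClosed.exists_root _ hdeg'
      obtain ⟨i, hi⟩ := h a
      apply hi
      obtain ⟨q, hq⟩ : g ∣ p i := Finset.gcd_dvd (Finset.mem_univ i)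
      rw [hq, map_mul]
      have : (Polynomial.aeval a) g = 0 := by
        rwa [Polynomial.aeval_def, ← Polynomial.eval_map]
      rw [this, zero_mul]


variable (F) in
abbrev Tup (K m : ℕ) := {p : Fin K → Polynomial F // ∀ i, p i ∈ degreeLT F (m + 1)}
variable (F) in
abbrev Nz (K m : ℕ) := {p : Fin K → Polynomial F // (∀ i, p i ∈ degreeLT F (m + 1)) ∧ p ≠ 0}
variable (F) in
abbrev Cop (K m : ℕ) [DecidableEq F] :=
  {p : Fin K → Polynomial F // (∀ i, p i ∈ degreeLT F (m + 1)) ∧ Finset.univ.gcd p = 1}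
variable (F) in
abbrev Mon (d : ℕ) := {g : Polynomial F // g.Monic ∧ g.natDegree = d}

instance (M : ℕ) : Finite (degreeLT F M) :=
  Finite.of_equiv _ (degreeLTEquiv F M).symm.toEquiv

noncomputable def tupEquiv (K m : ℕ) : Tup F K m ≃ (Fin K → degreeLT F (m + 1)) :=
  Equiv.subtypePiEquivPi

instance (K m : ℕ) : Finite (Tup F K m) := Finite.of_equiv _ (tupEquiv K m).symm

instance (K m : ℕ) : Finite (Nz F K m) := Finite.of_injective
  (fun x => (⟨x.1, x.2.1⟩ : Tup F K m))
  (fun a b h => by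
    have h' := congrArg Subtype.val h
    exact Subtype.ext h')

instance (K m : ℕ) : Finite (Cop F K m) := Finite.of_injective
  (fun x => (⟨x.1, x.2.1⟩ : Tup F K m))
  (fun a b h => by
    have h' := congrArg Subtype.val h
    exact Subtype.ext h')

instance (d : ℕ) : Finite (Mon F d) := Finite.of_equiv _
  ((Polynomial.monicEquivDegreeLT d).trans (degreeLTEquiv F d).toEquiv).symm

theorem card_tup (K m : ℕ) : Nat.card (Tup F K m) = Fintype.card F ^ (K * (m + 1)) := by
  rw [Nat.card_congr ((tupEquiv K m).trans
    (Equiv.piCongrRight fun _ => (degreeLTEquiv F (m + 1)).toEquiv))]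
  simp only [Nat.card_eq_fintype_card, Fintype.card_pi, Fintype.card_fin,
    Finset.prod_const, Finset.card_univ]
  ring

theorem card_mon (d : ℕ) : Nat.card (Mon F d) = Fintype.card F ^ d := by
  rw [Nat.card_congr ((Polynomial.monicEquivDegreeLT d).trans (degreeLTEquiv F d).toEquiv)]
  simp [Nat.card_eq_fintype_card, Fintype.card_pi]

theorem card_tup_eq_card_nz (K m : ℕ) :
    Nat.card (Tup F K m) = Nat.card (Nz F K m) + 1 := by
  classical
  have e := (Equiv.sumCompl (fun x : Tup F K m => x.1 = 0)).symm
  rw [Nat.card_congr e, Nat.card_sum]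
  have e2 : {x : Tup F K m // ¬ x.1 = 0} ≃ Nz F K m :=
    Equiv.subtypeSubtypeEquivSubtypeInter
      (fun p : Fin K → Polynomial F => ∀ i, p i ∈ degreeLT F (m + 1)) (fun p => p ≠ 0)
  have h1 : Nat.card {x : Tup F K m // x.1 = 0} = 1 := by
    have : Unique {x : Tup F K m // x.1 = 0} :=
      { default := ⟨⟨0, fun i => Submodule.zero_mem _⟩, rfl⟩
        uniq := fun x => Subtype.ext (Subtype.ext x.2) }
    exact Nat.card_unique
  rw [Nat.card_congr e2, h1, add_comm]


theorem gcd_natDegree_le {K m : ℕ} (p : Fin K → Polynomial F)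
    (hdeg : ∀ i, p i ∈ degreeLT F (m + 1)) (hne : p ≠ 0) :
    (Finset.univ.gcd p).natDegree ≤ m := by
  obtain ⟨i, hi⟩ := Function.ne_iff.mp hne
  have hd : Finset.univ.gcd p ∣ p i := Finset.gcd_dvd (Finset.mem_univ i)
  have h1 : (Finset.univ.gcd p).natDegree ≤ (p i).natDegree :=
    Polynomial.natDegree_le_of_dvd hd hi
  have h2 : (p i).natDegree < m + 1 :=
    (Polynomial.natDegree_lt_iff_degree_lt hi).mpr (mem_degreeLT.mp (hdeg i))
  omega

theorem gcd_ne_zero {K m : ℕ} (p : Fin K → Polynomial F)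
    (hne : p ≠ 0) : Finset.univ.gcd p ≠ 0 := by
  intro h
  exact hne (funext fun i => (Finset.gcd_eq_zero_iff.mp h) i (Finset.mem_univ i))

theorem gcd_monic {K m : ℕ} (p : Fin K → Polynomial F)
    (hne : p ≠ 0) : (Finset.univ.gcd p).Monic := by
  have := Polynomial.monic_normalize (gcd_ne_zero (m := m) p hne)
  rwa [Finset.normalize_gcd] at this

/-- The fiber of nonzero tuples whose gcd has degree `d` is monic-deg-d × coprime tuples. -/
noncomputable def fiberEquiv (K m d : ℕ) (hdm : d ≤ m) :
    {x : Nz F K m // (Finset.univ.gcd x.1).natDegree = d} ≃ Mon F d × Cop F K (m - d) where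
  toFun x := by
    obtain ⟨⟨p, hdeg, hne⟩, hd⟩ := x
    refine ⟨⟨Finset.univ.gcd p, gcd_monic (m := m) p hne, hd⟩,
      ⟨fun i => p i / Finset.univ.gcd p, ?_, ?_⟩⟩
    · intro i
      rw [mem_degreeLT]
      by_cases h0 : p i = 0
      · simp [h0, EuclideanDomain.zero_div]
      · set g := Finset.univ.gcd p with hg
        have hg0 : g ≠ 0 := gcd_ne_zero (m := m) p hne
        have hfac : g * (p i / g) = p i :=
          EuclideanDomain.mul_div_cancel' hg0 (Finset.gcd_dvd (Finset.mem_univ i))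
        have hh0 : p i / g ≠ 0 := by
          intro h; rw [h, mul_zero] at hfac; exact h0 hfac.symm
        rw [← natDegree_lt_iff_degree_lt hh0]
        have hmul : (p i).natDegree = g.natDegree + (p i / g).natDegree := by
          conv_lhs => rw [← hfac]
          exact natDegree_mul hg0 hh0
        have h2 : (p i).natDegree < m + 1 :=
          (Polynomial.natDegree_lt_iff_degree_lt h0).mpr (mem_degreeLT.mp (hdeg i))
        omega
    · set g := Finset.univ.gcd p with hg
      have hg0 : g ≠ 0 := gcd_ne_zero (m := m) p hne
      have key : g * Finset.univ.gcd (fun i => p i / g) = g * 1 := by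
        rw [mul_one]
        conv_rhs => rw [hg]
        have : ∀ i, p i = g * (p i / g) := fun i =>
          (EuclideanDomain.mul_div_cancel' hg0 (Finset.gcd_dvd (Finset.mem_univ i))).symm
        conv_rhs => rw [show p = fun i => g * (p i / g) from funext this]
        rw [Finset.gcd_mul_left, (gcd_monic (m := m) p hne).normalize_eq_self]
      exact mul_left_cancel₀ hg0 key
  invFun gh := by
    obtain ⟨⟨g, hgm, hgd⟩, ⟨h, hhdeg, hhg⟩⟩ := gh
    have hg0 : g ≠ 0 := hgm.ne_zero
    have hh0 : h ≠ 0 := by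
      intro h0
      rw [h0] at hhg
      have hz : Finset.univ.gcd (0 : Fin K → F[X]) = 0 :=
        Finset.gcd_eq_zero_iff.mpr fun i _ => rfl
      rw [hz] at hhg
      exact zero_ne_one hhg
    refine ⟨⟨fun i => g * h i, ?_, ?_⟩, ?_⟩
    · intro i
      rw [mem_degreeLT]
      by_cases h0 : h i = 0
      · simp only [h0, mul_zero, degree_zero]
        exact_mod_cast WithBot.bot_lt_coe (m + 1)
      · rw [← natDegree_lt_iff_degree_lt (mul_ne_zero hg0 h0), natDegree_mul hg0 h0]
        have : (h i).natDegree < m - d + 1 :=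
          (Polynomial.natDegree_lt_iff_degree_lt h0).mpr (mem_degreeLT.mp (hhdeg i))
        omega
    · obtain ⟨i, hi⟩ := Function.ne_iff.mp hh0
      exact fun h0 => mul_ne_zero hg0 hi (congrFun h0 i)
    · show (Finset.univ.gcd fun i => g * h i).natDegree = d
      rw [Finset.gcd_mul_left, hhg, mul_one, hgm.normalize_eq_self, hgd]
  left_inv := by
    rintro ⟨⟨p, hdeg, hne⟩, hd⟩
    apply Subtype.ext
    apply Subtype.ext
    funext i
    exact EuclideanDomain.mul_div_cancel' (gcd_ne_zero (m := m) p hne)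
      (Finset.gcd_dvd (Finset.mem_univ i))
  right_inv := by
    rintro ⟨⟨g, hgm, hgd⟩, ⟨h, hhdeg, hhg⟩⟩
    have hg0 : g ≠ 0 := hgm.ne_zero
    have hgcd : (Finset.univ.gcd fun i => g * h i) = g := by
      rw [Finset.gcd_mul_left, hhg, mul_one, hgm.normalize_eq_self]
    refine Prod.ext (Subtype.ext ?_) (Subtype.ext ?_)
    · exact hgcd
    · funext i
      show (g * h i) / (Finset.univ.gcd fun j => g * h j) = h i
      rw [hgcd]
      exact mul_div_cancel_left₀ (h i) hg0

theorem nat_card_sigma {ι : Type*} [Fintype ι] (f : ι → Type*) [∀ i, Finite (f i)] :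
    Nat.card (Σ i, f i) = ∑ i, Nat.card (f i) := by
  letI := fun i => Fintype.ofFinite (f i)
  simp only [Nat.card_eq_fintype_card]
  exact Fintype.card_sigma

theorem card_nz_eq_sum (K m : ℕ) :
    Nat.card (Nz F K m)
      = ∑ d ∈ Finset.range (m + 1), Fintype.card F ^ d * Nat.card (Cop F K (m - d)) := by
  have hf : ∀ x : Nz F K m, (Finset.univ.gcd x.1).natDegree < m + 1 := fun x =>
    Nat.lt_succ_of_le (gcd_natDegree_le x.1 x.2.1 x.2.2)
  set f : Nz F K m → Fin (m + 1) := fun x => ⟨(Finset.univ.gcd x.1).natDegree, hf x⟩ with hfdef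
  rw [Nat.card_congr (Equiv.sigmaFiberEquiv f).symm, nat_card_sigma]
  have step : ∀ d : Fin (m + 1),
      Nat.card {x : Nz F K m // f x = d}
        = Fintype.card F ^ (d : ℕ) * Nat.card (Cop F K (m - d)) := by
    intro d
    have e1 : {x : Nz F K m // f x = d}
        ≃ {x : Nz F K m // (Finset.univ.gcd x.1).natDegree = d} :=
      Equiv.subtypeEquivRight fun x => by
        simp [hfdef, Fin.ext_iff]
    rw [Nat.card_congr (e1.trans (fiberEquiv K m d (Nat.lt_succ_iff.mp d.isLt))),
      Nat.card_prod, card_mon]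
  rw [Finset.sum_congr rfl fun d _ => step d]
  exact Fin.sum_univ_eq_sum_range
    (fun d => Fintype.card F ^ d * Nat.card (Cop F K (m - d))) (m + 1)

theorem card_nz_succ (K m : ℕ) :
    Nat.card (Nz F K (m + 1))
      = Nat.card (Cop F K (m + 1)) + Fintype.card F * Nat.card (Nz F K m) := by
  rw [card_nz_eq_sum K (m + 1), card_nz_eq_sum K m, Finset.sum_range_succ'
    (fun d => Fintype.card F ^ d * Nat.card (Cop F K (m + 1 - d))) (m + 1)]
  simp only [Nat.succ_sub_succ, Nat.sub_zero, pow_zero, one_mul, pow_succ]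
  rw [add_comm, Finset.mul_sum]
  congr 1
  exact Finset.sum_congr rfl fun i _ => by ring

theorem card_nz_zero (K : ℕ) : Nat.card (Nz F K 0) = Nat.card (Cop F K 0) := by
  rw [card_nz_eq_sum K 0]
  simp

variable (F) in
abbrev Good (K n : ℕ) [DecidableEq F] := {p : Fin K → Polynomial F //
  (∀ i, p i ∈ degreeLT F (n + 1)) ∧ Finset.univ.gcd p = 1 ∧ ∃ i, (p i).coeff n ≠ 0}

instance (K n : ℕ) : Finite (Good F K n) := Finite.of_injective
  (fun x => (⟨x.1, x.2.1⟩ : Tup F K n))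
  (fun a b h => by
    have h' := congrArg Subtype.val h
    exact Subtype.ext h')

theorem card_cop_split (K n : ℕ) (hn : 1 ≤ n) :
    Nat.card (Cop F K n) = Nat.card (Good F K n) + Nat.card (Cop F K (n - 1)) := by
  classical
  rw [Nat.card_congr
    (Equiv.sumCompl (fun x : Cop F K n => ∃ i, (x.1 i).coeff n ≠ 0)).symm, Nat.card_sum]
  congr 1
  · refine Nat.card_congr ?_
    refine (Equiv.subtypeSubtypeEquivSubtypeInter
      (fun p : Fin K → Polynomial F =>
        (∀ i, p i ∈ degreeLT F (n + 1)) ∧ Finset.univ.gcd p = 1)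
      (fun p => ∃ i, (p i).coeff n ≠ 0)).trans
      (Equiv.subtypeEquivRight fun p => by tauto)
  · refine Nat.card_congr ?_
    refine (Equiv.subtypeSubtypeEquivSubtypeInter
      (fun p : Fin K → Polynomial F =>
        (∀ i, p i ∈ degreeLT F (n + 1)) ∧ Finset.univ.gcd p = 1)
      (fun p => ¬ ∃ i, (p i).coeff n ≠ 0)).trans
      (Equiv.subtypeEquivRight fun p => ?_)
    push_neg
    constructor
    · rintro ⟨⟨hdeg, hg⟩, hc⟩
      refine ⟨fun i => ?_, hg⟩
      rw [mem_degreeLT, Nat.sub_add_cancel hn, degree_lt_iff_coeff_zero]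
      intro m hm
      rcases Nat.lt_or_ge m (n + 1) with h | h
      · have : m = n := by omega
        rw [this]; exact hc i
      · exact (degree_lt_iff_coeff_zero _ (n + 1)).mp (mem_degreeLT.mp (hdeg i)) m h
    · rintro ⟨hdeg, hg⟩
      have hdn : ∀ i, (p i).degree < (n : WithBot ℕ) := fun i => by
        have := mem_degreeLT.mp (hdeg i)
        rwa [Nat.sub_add_cancel hn] at this
      refine ⟨⟨fun i => ?_, hg⟩, fun i => ?_⟩
      · rw [mem_degreeLT]
        exact (hdn i).trans (by exact_mod_cast WithBot.coe_lt_coe.mpr (Nat.lt_succ_self n))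
      · exact Polynomial.coeff_eq_zero_of_degree_lt ((hdn i).trans_le (by exact_mod_cast le_refl _))

section Homogenization
open MvPolynomial

theorem fin2_degree (d : Fin 2 →₀ ℕ) : d.degree = d 0 + d 1 := by
  rw [Finsupp.degree_apply, Finset.sum_subset (Finset.subset_univ d.support)
    (fun i _ hi => Finsupp.notMem_support_iff.mp hi), Fin.sum_univ_two]

theorem fin2_eq_single_add (d : Fin 2 →₀ ℕ) :
    d = Finsupp.single 0 (d 0) + Finsupp.single 1 (d 1) := by
  ext a
  fin_cases a <;> simp [Finsupp.single_apply]

variable (F) in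
/-- homogenization of a polynomial of degree ≤ n to a binary form of degree n -/
noncomputable def homog (n : ℕ) (p : Polynomial F) : MvPolynomial (Fin 2) F :=
  ∑ j ∈ Finset.range (n + 1),
    MvPolynomial.monomial (Finsupp.single 0 j + Finsupp.single 1 (n - j)) (p.coeff j)

variable (F) in
/-- dehomogenization: substitute X ↦ X, Y ↦ 1 -/
noncomputable def deh : MvPolynomial (Fin 2) F →ₐ[F] Polynomial F :=
  MvPolynomial.aeval ![Polynomial.X, 1]

theorem homog_isHomogeneous (n : ℕ) (p : Polynomial F) :
    (homog F n p).IsHomogeneous n := by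
  apply MvPolynomial.IsHomogeneous.sum
  intro j hj
  apply MvPolynomial.isHomogeneous_monomial
  rw [fin2_degree]
  simp only [Finsupp.add_apply, Finsupp.single_apply]
  simp only [Finset.mem_range] at hj
  norm_num
  omega

theorem deh_monomial (d : Fin 2 →₀ ℕ) (c : F) :
    deh F (MvPolynomial.monomial d c) = Polynomial.C c * Polynomial.X ^ (d 0) := by
  rw [deh, MvPolynomial.aeval_monomial,
    Finsupp.prod_fintype _ _ (fun i => pow_zero _), Fin.prod_univ_two]
  simp [Polynomial.C_eq_algebraMap]

theorem deh_homog (n : ℕ) (p : Polynomial F) (hp : p.natDegree < n + 1) :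
    deh F (homog F n p) = p := by
  rw [homog, map_sum]
  conv_rhs => rw [Polynomial.as_sum_range' p (n + 1) hp]
  apply Finset.sum_congr rfl
  intro j _
  rw [deh_monomial]
  simp [Finsupp.single_apply, Polynomial.C_mul_X_pow_eq_monomial]

theorem homog_add (n : ℕ) (p q : Polynomial F) :
    homog F n (p + q) = homog F n p + homog F n q := by
  rw [homog, homog, homog, ← Finset.sum_add_distrib]
  apply Finset.sum_congr rfl
  intro j _
  simp

theorem homog_sum {ι : Type*} (n : ℕ) (s : Finset ι) (g : ι → Polynomial F) :
    homog F n (∑ i ∈ s, g i) = ∑ i ∈ s, homog F n (g i) := by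
  induction s using Finset.cons_induction with
  | empty => simp [homog]
  | cons a s ha ih => rw [Finset.sum_cons, Finset.sum_cons, homog_add, ih]

theorem homog_deh (n : ℕ) (f : MvPolynomial (Fin 2) F) (hf : f.IsHomogeneous n) :
    homog F n (deh F f) = f := by
  rw [show deh F f = ∑ d ∈ f.support, deh F (MvPolynomial.monomial d (MvPolynomial.coeff d f))
      from by rw [← map_sum, MvPolynomial.support_sum_monomial_coeff]]
  rw [homog_sum]
  conv_rhs => rw [MvPolynomial.as_sum f]
  apply Finset.sum_congr rfl
  intro d hd
  have hdeg : d 0 + d 1 = n := by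
    have h1 := hf (MvPolynomial.mem_support_iff.mp hd)
    rw [← fin2_degree]
    rw [Finsupp.degree_eq_weight_one]
    exact h1
  have hd0 : d 0 ≤ n := by omega
  rw [deh_monomial, homog]
  rw [Finset.sum_eq_single (d 0)]
  · have h2 : n - d 0 = d 1 := by omega
    have h3 : (Polynomial.C (MvPolynomial.coeff d f) * Polynomial.X ^ d 0).coeff (d 0)
        = MvPolynomial.coeff d f := by
      simp [Polynomial.coeff_C_mul, Polynomial.coeff_X_pow]
    rw [h2, h3, ← fin2_eq_single_add]
  · intro j _ hj
    have : (Polynomial.C (MvPolynomial.coeff d f) * Polynomial.X ^ d 0).coeff j = 0 := by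
      simp [Polynomial.coeff_C_mul, Polynomial.coeff_X_pow, hj]
    rw [this, map_zero]
  · intro h
    exact absurd (Finset.mem_range.mpr (by omega)) h

theorem deh_mem_degreeLT (n : ℕ) (f : MvPolynomial (Fin 2) F) (hf : f.IsHomogeneous n) :
    deh F f ∈ Polynomial.degreeLT F (n + 1) := by
  rw [show deh F f = ∑ d ∈ f.support, deh F (MvPolynomial.monomial d (MvPolynomial.coeff d f))
      from by rw [← map_sum, MvPolynomial.support_sum_monomial_coeff]]
  apply Submodule.sum_mem
  intro d hd
  have hdeg : d 0 + d 1 = n := by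
    have h1 := hf (MvPolynomial.mem_support_iff.mp hd)
    rw [← fin2_degree]
    rw [Finsupp.degree_eq_weight_one]
    exact h1
  rw [deh_monomial, Polynomial.mem_degreeLT]
  refine lt_of_le_of_lt (Polynomial.degree_C_mul_X_pow_le _ _) ?_
  exact_mod_cast Nat.lt_succ_of_le (by omega)

end Homogenization

section Eval
variable {E : Type*}

theorem aeval_homog [CommRing E] [Algebra F E] (n : ℕ) (p : Polynomial F) (a b : E) :
    MvPolynomial.aeval ![a, b] (homog F n p)
      = ∑ j ∈ Finset.range (n + 1), algebraMap F E (p.coeff j) * a ^ j * b ^ (n - j) := by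
  rw [homog, map_sum]
  apply Finset.sum_congr rfl
  intro j _
  rw [MvPolynomial.aeval_monomial, Finsupp.prod_fintype _ _ (fun i => pow_zero _),
    Fin.prod_univ_two]
  simp [Finsupp.single_apply, mul_assoc]

theorem aeval_homog_one [CommRing E] [Algebra F E] (n : ℕ) (p : Polynomial F)
    (hp : p.natDegree < n + 1) (a : E) :
    MvPolynomial.aeval ![a, 1] (homog F n p) = Polynomial.aeval a p := by
  rw [aeval_homog, Polynomial.aeval_eq_sum_range' hp]
  apply Finset.sum_congr rfl
  intro j _
  rw [one_pow, mul_one, Algebra.smul_def]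

theorem aeval_homog_zero [CommRing E] [Algebra F E] (n : ℕ) (p : Polynomial F) (a : E) :
    MvPolynomial.aeval ![a, 0] (homog F n p) = algebraMap F E (p.coeff n) * a ^ n := by
  rw [aeval_homog]
  rw [Finset.sum_eq_single n]
  · simp
  · intro j hj hjn
    have : n - j ≠ 0 := by
      simp only [Finset.mem_range] at hj
      omega
    rw [zero_pow this, mul_zero]
  · intro h
    exact absurd (Finset.mem_range.mpr (Nat.lt_succ_self n)) h

theorem aeval_homog_of_ne_zero [Field E] [Algebra F E] (n : ℕ) (p : Polynomial F)
    (hp : p.natDegree < n + 1) (a b : E) (hb : b ≠ 0) :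
    MvPolynomial.aeval ![a, b] (homog F n p)
      = b ^ n * Polynomial.aeval (a * b⁻¹) p := by
  rw [aeval_homog, Polynomial.aeval_eq_sum_range' hp, Finset.mul_sum]
  apply Finset.sum_congr rfl
  intro j hj
  have hjn : j ≤ n := by
    simp only [Finset.mem_range] at hj
    omega
  rw [Algebra.smul_def, mul_pow, inv_pow, ← pow_sub_mul_pow b hjn]
  have hbj : b ^ j ≠ 0 := pow_ne_zero _ hb
  field_simp

end Eval

theorem natDegree_lt_of_mem_degreeLT {q : Polynomial F} {M : ℕ}
    (h : q ∈ degreeLT F (M + 1)) : q.natDegree < M + 1 := by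
  by_cases h0 : q = 0
  · simp [h0]
  · exact (Polynomial.natDegree_lt_iff_degree_lt h0).mpr (mem_degreeLT.mp h)

noncomputable def mainEquiv (K n : ℕ) :
    {f : Fin K → MvPolynomial (Fin 2) F // (∀ i, (f i).IsHomogeneous n) ∧
       (∀ a b : AlgebraicClosure F, ¬(a = 0 ∧ b = 0) →
         ∃ i, (MvPolynomial.aeval ![a, b]) (f i) ≠ 0)}
    ≃ {p : Fin K → Polynomial F // (∀ i, p i ∈ degreeLT F (n + 1)) ∧
       (∀ a : AlgebraicClosure F, ∃ i, Polynomial.aeval a (p i) ≠ 0) ∧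
       ∃ i, (p i).coeff n ≠ 0} where
  toFun x := by
    obtain ⟨f, hfh, hfz⟩ := x
    refine ⟨fun i => deh F (f i), fun i => deh_mem_degreeLT n (f i) (hfh i), ?_, ?_⟩
    · intro a
      obtain ⟨i, hi⟩ := hfz a 1 (by simp)
      refine ⟨i, fun hc => hi ?_⟩
      rw [← homog_deh n (f i) (hfh i), aeval_homog_one n _
        (natDegree_lt_of_mem_degreeLT (deh_mem_degreeLT n (f i) (hfh i))), hc]
    · obtain ⟨i, hi⟩ := hfz 1 0 (by simp)
      refine ⟨i, fun hc => hi ?_⟩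
      rw [← homog_deh n (f i) (hfh i), aeval_homog_zero, hc]
      simp
  invFun x := by
    obtain ⟨p, hdeg, hroot, hcoeff⟩ := x
    refine ⟨fun i => homog F n (p i), fun i => homog_isHomogeneous n (p i), ?_⟩
    intro a b hab
    by_cases hb : b = 0
    · have ha : a ≠ 0 := fun h => hab ⟨h, hb⟩
      obtain ⟨i, hi⟩ := hcoeff
      refine ⟨i, ?_⟩
      rw [hb, aeval_homog_zero]
      exact mul_ne_zero ((map_ne_zero_iff _ (algebraMap F _).injective).mpr hi)
        (pow_ne_zero _ ha)
    · obtain ⟨i, hi⟩ := hroot (a * b⁻¹)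
      refine ⟨i, ?_⟩
      rw [aeval_homog_of_ne_zero n _ (natDegree_lt_of_mem_degreeLT (hdeg i)) a b hb]
      exact mul_ne_zero (pow_ne_zero _ hb) hi
  left_inv := by
    rintro ⟨f, hfh, hfz⟩
    exact Subtype.ext (funext fun i => homog_deh n (f i) (hfh i))
  right_inv := by
    rintro ⟨p, hdeg, hroot, hcoeff⟩
    exact Subtype.ext (funext fun i => deh_homog n (p i)
      (natDegree_lt_of_mem_degreeLT (hdeg i)))

/-- generic: if a setoid's classes are the orbits of a free action of `G`, then
the type is equivalent to `Quotient s × G`. -/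
noncomputable def quotEquiv {α : Type*} (s : Setoid α) (G : Type*) (act : G → α → α)
    (hrel : ∀ x y, s.r x y ↔ ∃ u : G, act u x = y)
    (hfree : ∀ u v x, act u x = act v x → u = v) : α ≃ Quotient s × G where
  toFun x :=
    (Quotient.mk s x, Classical.choose ((hrel _ x).mp
      (Quotient.exact (s := s) (Quotient.out_eq (Quotient.mk s x)))))
  invFun cu := act cu.2 (Quotient.out cu.1)
  left_inv x := Classical.choose_spec ((hrel _ x).mp
      (Quotient.exact (s := s) (Quotient.out_eq (Quotient.mk s x))))
  right_inv := by
    rintro ⟨c, u⟩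
    have hc : Quotient.mk s (act u (Quotient.out c)) = c := by
      conv_rhs => rw [← Quotient.out_eq c]
      exact (Quotient.sound ((hrel _ _).mpr ⟨u, rfl⟩)).symm
    refine Prod.ext hc ?_
    set x' := act u (Quotient.out c) with hx'
    have hspec := Classical.choose_spec ((hrel _ x').mp
      (Quotient.exact (s := s) (Quotient.out_eq (Quotient.mk s x'))))
    apply hfree _ _ (Quotient.out (Quotient.mk s x'))
    rw [hspec, hx']
    exact (congrArg (act u) (congrArg Quotient.out hc)).symm

variable (F) in
abbrev AlphaT (K n : ℕ) := {f : Fin K → MvPolynomial (Fin 2) F //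
  (∀ i, (f i).IsHomogeneous n) ∧
  (∀ a b : AlgebraicClosure F, ¬(a = 0 ∧ b = 0) →
    ∃ i, (MvPolynomial.aeval ![a, b]) (f i) ≠ 0)}

noncomputable def smulAlpha (K n : ℕ) (u : Fˣ) (x : AlphaT F K n) : AlphaT F K n :=
  ⟨fun i => (u : F) • x.1 i,
    fun i => (MvPolynomial.homogeneousSubmodule (Fin 2) F n).smul_mem _ (x.2.1 i),
    by
      intro a b hab
      obtain ⟨i, hi⟩ := x.2.2 a b hab
      refine ⟨i, ?_⟩
      show (MvPolynomial.aeval ![a, b]) ((u : F) • x.1 i) ≠ 0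
      rw [MvPolynomial.smul_eq_C_mul, map_mul, MvPolynomial.aeval_C]
      exact mul_ne_zero ((map_ne_zero_iff _ (algebraMap F _).injective).mpr u.ne_zero) hi⟩

theorem alpha_exists_ne (K n : ℕ) (x : AlphaT F K n) : ∃ i, x.1 i ≠ 0 := by
  obtain ⟨i, hi⟩ := x.2.2 1 0 (by simp)
  exact ⟨i, fun h0 => hi (by rw [h0]; simp)⟩

theorem smulAlpha_free (K n : ℕ) (u v : Fˣ) (x : AlphaT F K n)
    (h : smulAlpha K n u x = smulAlpha K n v x) : u = v := by
  obtain ⟨i, hi⟩ := alpha_exists_ne K n x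
  have h1 : (u : F) • x.1 i = (v : F) • x.1 i := congrFun (congrArg Subtype.val h) i
  have h2 : ((u : F) - (v : F)) • x.1 i = 0 := by
    rw [sub_smul, h1, sub_self]
  rcases smul_eq_zero.mp h2 with h3 | h3
  · exact Units.ext (sub_eq_zero.mp h3)
  · exact absurd h3 hi

end Stmt11

/-- The number of degree-`n` morphisms `P^1 → P^N` over `F_q`, i.e. of orbits of the
diagonal scaling action of `Fˣ` on `(N+1)`-tuples of degree-`n` binary forms with no
common zero over the algebraic closure, equals
`((q^{N+1}−1)/(q−1)) · (q^{(N+1)n} − q^{(N+1)n−N})`. -/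
theorem stmt_11 (F : Type*) [Field F] [Fintype F] (N n : ℕ) (hN : 1 ≤ N) (hn : 1 ≤ n)
    (s : Setoid {f : Fin (N + 1) → MvPolynomial (Fin 2) F //
        (∀ i, (f i).IsHomogeneous n) ∧
        (∀ a b : AlgebraicClosure F, ¬(a = 0 ∧ b = 0) →
          ∃ i, (MvPolynomial.aeval ![a, b]) (f i) ≠ 0)})
    (hs : ∀ f g, s.r f g ↔ ∃ u : Fˣ, ∀ i, (g : Fin (N + 1) → MvPolynomial (Fin 2) F) i
        = (u : F) • (f : Fin (N + 1) → MvPolynomial (Fin 2) F) i) :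
    (Nat.card (Quotient s) : ℚ)
      = (((Fintype.card F : ℚ) ^ (N + 1) - 1) / ((Fintype.card F : ℚ) - 1)) *
        ((Fintype.card F : ℚ) ^ ((N + 1) * n)
          - (Fintype.card F : ℚ) ^ ((N + 1) * n - N)) := by
  classical
  open Stmt11 in
  letI : NeZero (N + 1) := ⟨N.succ_ne_zero⟩
  set Q : ℚ := (Fintype.card F : ℚ) with hQdef
  have hq2 : 2 ≤ Fintype.card F := Fintype.one_lt_card
  have hQ2 : (2 : ℚ) ≤ Q := by rw [hQdef]; exact_mod_cast hq2
  have hQ1 : Q - 1 ≠ 0 := by linarith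
  -- Step 1 : orbit counting
  have e1 : AlphaT F (N + 1) n ≃ Quotient s × Fˣ := by
    refine quotEquiv s Fˣ (smulAlpha (N + 1) n) ?_ (smulAlpha_free (N + 1) n)
    intro x y
    rw [hs x y]
    constructor
    · rintro ⟨u, hu⟩
      exact ⟨u, Subtype.ext (funext fun i => (hu i).symm)⟩
    · rintro ⟨u, hu⟩
      exact ⟨u, fun i => (congrFun (congrArg Subtype.val hu) i).symm⟩
  have hcard1 : Nat.card (AlphaT F (N + 1) n)
      = Nat.card (Quotient s) * (Fintype.card F - 1) := by
    rw [Nat.card_congr e1, Nat.card_prod]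
    congr 1
    rw [Nat.card_eq_fintype_card, Fintype.card_units]
  -- Step 2 : transfer to polynomial tuples
  have hcard2 : Nat.card (AlphaT F (N + 1) n) = Nat.card (Good F (N + 1) n) := by
    refine Nat.card_congr ((mainEquiv (N + 1) n).trans (Equiv.subtypeEquivRight fun p => ?_))
    have h := gcd_eq_one_iff_no_common_root (K := N + 1) p
    tauto
  -- Step 3 : counting
  have hz : ∀ m : ℕ, (Nat.card (Nz F (N + 1) m) : ℚ) = Q ^ ((N + 1) * (m + 1)) - 1 := by
    intro m
    have h1 : Nat.card (Nz F (N + 1) m) + 1 = Fintype.card F ^ ((N + 1) * (m + 1)) := by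
      rw [← card_tup_eq_card_nz, card_tup]
    have h2 : ((Nat.card (Nz F (N + 1) m) : ℚ)) + 1 = Q ^ ((N + 1) * (m + 1)) := by
      rw [hQdef]; exact_mod_cast h1
    linarith
  have hC : ∀ m : ℕ, (Nat.card (Cop F (N + 1) m) : ℚ)
      = Q ^ ((N + 1) * (m + 1)) - 1 - Q * (Q ^ ((N + 1) * m) - 1) := by
    intro m
    cases m with
    | zero =>
      rw [← card_nz_zero, hz 0]
      norm_num
    | succ m =>
      have h1 : Nat.card (Nz F (N + 1) (m + 1))
          = Nat.card (Cop F (N + 1) (m + 1)) + Fintype.card F * Nat.card (Nz F (N + 1) m) :=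
        card_nz_succ (N + 1) m
      have h1' : (Nat.card (Nz F (N + 1) (m + 1)) : ℚ)
          = Nat.card (Cop F (N + 1) (m + 1)) + Q * Nat.card (Nz F (N + 1) m) := by
        rw [hQdef]; exact_mod_cast h1
      have e1 := hz (m + 1)
      have e2 := hz m
      linear_combination e1 - h1' - Q * e2
  -- split n = k + 1
  obtain ⟨k, rfl⟩ : ∃ k, n = k + 1 := ⟨n - 1, by omega⟩
  have hsplit : Nat.card (Cop F (N + 1) (k + 1))
      = Nat.card (Good F (N + 1) (k + 1)) + Nat.card (Cop F (N + 1) k) := by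
    have := card_cop_split (F := F) (N + 1) (k + 1) (by omega)
    simpa using this
  have hG : (Nat.card (Good F (N + 1) (k + 1)) : ℚ)
      = (Nat.card (Cop F (N + 1) (k + 1)) : ℚ) - (Nat.card (Cop F (N + 1) k) : ℚ) := by
    have := congrArg (Nat.cast (R := ℚ)) hsplit
    push_cast at this
    linarith
  -- final arithmetic
  have hXG : (Nat.card (Quotient s) : ℚ) * (Q - 1)
      = (Nat.card (Good F (N + 1) (k + 1)) : ℚ) := by
    rw [← hcard2, hcard1]
    push_cast [Nat.cast_sub (by omega : 1 ≤ Fintype.card F)]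
    ring
  rw [div_mul_eq_mul_div, eq_div_iff hQ1, hXG, hG, hC (k + 1), hC k,
    show (N + 1) * (k + 1) - N = (N + 1) * k + 1 from by rw [Nat.mul_succ]; omega]
  ring
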